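/- With the notation of the C-SHIFT gradient formula, the all-ones vector annihilates the gradient: 1ᵀ∇‖C_α‖_F² = 0 for all admissible α; consequently the sum a = Σᵢαᵢ is conserved along gradient-descent trajectories of ‖C_α‖_F². -/

import Mathlib

open Matrix BigOperators

/-- `A_α = C̃ + α1ᵀ + 1αᵀ`. -/
noncomputable def Amat {M : ℕ} (Ct : Matrix (Fin M) (Fin M) ℝ) (α : Fin M → ℝ) :
    Matrix (Fin M) (Fin M) ℝ :=
  Ct + vecMulVec α (1 : Fin M → ℝ) + vecMulVec (1 : Fin M → ℝ) α

/-- `v(α) = 1/(1ᵀ A_α⁻¹ 1)`. -/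
noncomputable def vfun {M : ℕ} (Ct : Matrix (Fin M) (Fin M) ℝ) (α : Fin M → ℝ) : ℝ :=
  1 / ((1 : Fin M → ℝ) ⬝ᵥ ((Amat Ct α)⁻¹ *ᵥ (1 : Fin M → ℝ)))

/-- `C_α = A_α − v(α)·11ᵀ`. -/
noncomputable def Cmat {M : ℕ} (Ct : Matrix (Fin M) (Fin M) ℝ) (α : Fin M → ℝ) :
    Matrix (Fin M) (Fin M) ℝ :=
  Amat Ct α - vfun Ct α • vecMulVec (1 : Fin M → ℝ) (1 : Fin M → ℝ)

/-- Squared Frobenius norm `‖X‖_F² = Σᵢⱼ Xᵢⱼ²`. -/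
noncomputable def frobSq {M : ℕ} (X : Matrix (Fin M) (Fin M) ℝ) : ℝ :=
  ∑ i, ∑ j, (X i j) ^ 2

namespace CSHIFT

variable {M : ℕ}

lemma vmv_mulVec (u v y : Fin M → ℝ) : vecMulVec u v *ᵥ y = (v ⬝ᵥ y) • u := by
  ext i
  simp [vecMulVec_apply, mulVec, dotProduct, Finset.mul_sum, Finset.sum_mul, mul_comm,
    mul_left_comm]

lemma one_ne_zero' (hM : Nonempty (Fin M)) : (1 : Fin M → ℝ) ≠ 0 := by
  intro h
  have := congrFun h (Classical.arbitrary _)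
  simp at this

lemma s_ne (Ct : Matrix (Fin M) (Fin M) ℝ) (hCt : Ct.PosDef) (hM : Nonempty (Fin M))
    {β : Fin M → ℝ} (h1 : IsUnit (Amat Ct β).det) :
    (1 : Fin M → ℝ) ⬝ᵥ ((Amat Ct β)⁻¹ *ᵥ (1 : Fin M → ℝ)) ≠ 0 := by
  set A := Amat Ct β with hA
  set y := A⁻¹ *ᵥ (1 : Fin M → ℝ) with hy
  have hAy : A *ᵥ y = 1 := by
    rw [hy, mulVec_mulVec, Matrix.mul_nonsing_inv _ h1, one_mulVec]
  have hy0 : y ≠ 0 := by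
    intro h
    rw [h, mulVec_zero] at hAy
    exact one_ne_zero' hM hAy.symm
  have hq : 0 < y ⬝ᵥ (Ct *ᵥ y) := by
    have := hCt.dotProduct_mulVec_pos hy0
    simpa using this
  have hs : (1 : Fin M → ℝ) ⬝ᵥ y
      = y ⬝ᵥ (Ct *ᵥ y) + 2 * (β ⬝ᵥ y) * ((1 : Fin M → ℝ) ⬝ᵥ y) := by
    conv_lhs => rw [← hAy]
    rw [hA]
    unfold Amat
    rw [add_mulVec, add_mulVec, vmv_mulVec, vmv_mulVec, add_dotProduct, add_dotProduct,
      smul_dotProduct, smul_dotProduct, dotProduct_comm y (Ct *ᵥ y)]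
    simp only [smul_eq_mul]
    ring
  intro h0
  rw [h0, mul_zero, add_zero] at hs
  exact hq.ne' hs.symm


lemma Amat_shift (Ct : Matrix (Fin M) (Fin M) ℝ) (β : Fin M → ℝ) (t : ℝ) :
    Amat Ct (β + t • (1 : Fin M → ℝ)) =
      Amat Ct β + (2 * t) • vecMulVec (1 : Fin M → ℝ) (1 : Fin M → ℝ) := by
  ext i j
  simp [Amat, vecMulVec_apply]
  ring

lemma Cmat_shift (Ct : Matrix (Fin M) (Fin M) ℝ) (hCt : Ct.PosDef) (hM : Nonempty (Fin M))
    (β : Fin M → ℝ) (t : ℝ) (h1 : IsUnit (Amat Ct β).det)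
    (h2 : IsUnit (Amat Ct (β + t • (1 : Fin M → ℝ))).det) :
    Cmat Ct (β + t • (1 : Fin M → ℝ)) = Cmat Ct β := by
  set A := Amat Ct β with hA
  set u := A⁻¹ *ᵥ (1 : Fin M → ℝ) with hu
  set s := (1 : Fin M → ℝ) ⬝ᵥ u with hs
  have hsne : s ≠ 0 := s_ne Ct hCt hM h1
  have hAu : A *ᵥ u = 1 := by
    rw [hu, mulVec_mulVec, Matrix.mul_nonsing_inv _ h1, one_mulVec]
  have hu0 : u ≠ 0 := by
    intro h
    rw [h, mulVec_zero] at hAu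
    exact one_ne_zero' hM hAu.symm
  set c := 1 + 2 * t * s with hc
  have hA'u : Amat Ct (β + t • (1 : Fin M → ℝ)) *ᵥ u = c • (1 : Fin M → ℝ) := by
    rw [Amat_shift, add_mulVec, hAu, smul_mulVec, vmv_mulVec, ← hs]
    ext i
    simp [hc]
  have hcne : c ≠ 0 := by
    intro h
    rw [h, zero_smul] at hA'u
    apply hu0
    calc u = 1 *ᵥ u := (one_mulVec u).symm
    _ = ((Amat Ct (β + t • (1 : Fin M → ℝ)))⁻¹ * Amat Ct (β + t • (1 : Fin M → ℝ))) *ᵥ u := by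
        rw [Matrix.nonsing_inv_mul _ h2]
    _ = 0 := by rw [← mulVec_mulVec, hA'u, mulVec_zero]
  have hu' : (Amat Ct (β + t • (1 : Fin M → ℝ)))⁻¹ *ᵥ (1 : Fin M → ℝ) = c⁻¹ • u := by
    have h1' : (1 : Fin M → ℝ) = Amat Ct (β + t • (1 : Fin M → ℝ)) *ᵥ (c⁻¹ • u) := by
      rw [mulVec_smul, hA'u, smul_smul, inv_mul_cancel₀ hcne, one_smul]
    have h2' := congrArg (fun w => (Amat Ct (β + t • (1 : Fin M → ℝ)))⁻¹ *ᵥ w) h1'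
    rw [h2', mulVec_mulVec, Matrix.nonsing_inv_mul _ h2, one_mulVec]
  have hv' : vfun Ct (β + t • (1 : Fin M → ℝ)) = 1 / (c⁻¹ * s) := by
    rw [vfun, hu', dotProduct_smul, ← hs, smul_eq_mul]
  have hv : vfun Ct β = 1 / s := by rw [vfun, ← hA, ← hu, ← hs]
  unfold Cmat
  rw [Amat_shift, hv', hv, hc]
  ext i j
  simp [vecMulVec_apply]
  field_simp
  ring


lemma diffAt_prod {ι : Type*} (u : Finset ι) (f : ι → (Fin M → ℝ) → ℝ) {x : Fin M → ℝ}
    (hf : ∀ i ∈ u, DifferentiableAt ℝ (f i) x) :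
    DifferentiableAt ℝ (fun β => ∏ i ∈ u, f i β) x := by
  classical
  revert hf
  induction u using Finset.induction with
  | empty => exact fun _ => by simpa using differentiableAt_const (1 : ℝ)
  | insert a s h ih =>
    intro hf
    simp only [Finset.prod_insert h]
    exact (hf _ (Finset.mem_insert_self _ _)).mul
      (ih fun i hi => hf i (Finset.mem_insert_of_mem hi))

lemma diffAt_det {f : (Fin M → ℝ) → Matrix (Fin M) (Fin M) ℝ} {x : Fin M → ℝ}
    (hf : ∀ i j, DifferentiableAt ℝ (fun β => f β i j) x) :
    DifferentiableAt ℝ (fun β => (f β).det) x := by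
  simp only [Matrix.det_apply']
  apply DifferentiableAt.fun_sum
  intro σ _
  apply DifferentiableAt.const_mul
  apply diffAt_prod
  intro i _
  exact hf (σ i) i

lemma diffAt_Amat_entry (Ct : Matrix (Fin M) (Fin M) ℝ) (x : Fin M → ℝ) (i j : Fin M) :
    DifferentiableAt ℝ (fun β : Fin M → ℝ => Amat Ct β i j) x := by
  simp only [Amat, Matrix.add_apply, vecMulVec_apply, Pi.one_apply, mul_one, one_mul]
  fun_prop

lemma diffAt_adj_entry (Ct : Matrix (Fin M) (Fin M) ℝ) (x : Fin M → ℝ) (i j : Fin M) :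
    DifferentiableAt ℝ (fun β : Fin M → ℝ => (Amat Ct β).adjugate i j) x := by
  simp only [Matrix.adjugate_apply]
  apply diffAt_det
  intro k l
  simp only [Matrix.updateRow_apply]
  rcases eq_or_ne k j with hk | hk
  · simp only [if_pos hk]
    exact differentiableAt_const _
  · simp only [if_neg hk]
    exact diffAt_Amat_entry Ct x k l

lemma diffAt_inv_entry (Ct : Matrix (Fin M) (Fin M) ℝ) {x : Fin M → ℝ}
    (hx : IsUnit (Amat Ct x).det) (i j : Fin M) :
    DifferentiableAt ℝ (fun β : Fin M → ℝ => (Amat Ct β)⁻¹ i j) x := by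
  have hev : (fun β : Fin M → ℝ => (Amat Ct β)⁻¹ i j)
      = fun β => ((Amat Ct β).det)⁻¹ * (Amat Ct β).adjugate i j := by
    funext β
    rw [Matrix.inv_def, Matrix.smul_apply, smul_eq_mul, Ring.inverse_eq_inv']
  rw [hev]
  have hdet : DifferentiableAt ℝ (fun β => (Amat Ct β).det) x :=
    diffAt_det fun i j => diffAt_Amat_entry Ct x i j
  have hne : (Amat Ct x).det ≠ 0 := by
    simpa [isUnit_iff_ne_zero] using hx
  exact (hdet.inv hne).mul (diffAt_adj_entry Ct x i j)

lemma sfun_eq (Ct : Matrix (Fin M) (Fin M) ℝ) (β : Fin M → ℝ) :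
    (1 : Fin M → ℝ) ⬝ᵥ ((Amat Ct β)⁻¹ *ᵥ (1 : Fin M → ℝ)) = ∑ i, ∑ j, (Amat Ct β)⁻¹ i j := by
  simp [dotProduct, mulVec]

lemma diffAt_sfun (Ct : Matrix (Fin M) (Fin M) ℝ) {x : Fin M → ℝ}
    (hx : IsUnit (Amat Ct x).det) :
    DifferentiableAt ℝ
      (fun β : Fin M → ℝ => (1 : Fin M → ℝ) ⬝ᵥ ((Amat Ct β)⁻¹ *ᵥ (1 : Fin M → ℝ))) x := by
  have : (fun β : Fin M → ℝ => (1 : Fin M → ℝ) ⬝ᵥ ((Amat Ct β)⁻¹ *ᵥ (1 : Fin M → ℝ)))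
      = fun β => ∑ i, ∑ j, (Amat Ct β)⁻¹ i j := by
    funext β; exact sfun_eq Ct β
  rw [this]
  exact DifferentiableAt.fun_sum fun i _ =>
    DifferentiableAt.fun_sum fun j _ => diffAt_inv_entry Ct hx i j

lemma diffAt_F (Ct : Matrix (Fin M) (Fin M) ℝ) (hCt : Ct.PosDef) (hM : Nonempty (Fin M))
    {x : Fin M → ℝ} (hx : IsUnit (Amat Ct x).det) :
    DifferentiableAt ℝ (fun β : Fin M → ℝ => frobSq (Cmat Ct β)) x := by
  unfold frobSq
  apply DifferentiableAt.fun_sum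
  intro i _
  apply DifferentiableAt.fun_sum
  intro j _
  apply DifferentiableAt.pow
  unfold Cmat vfun
  simp only [Matrix.sub_apply, Matrix.smul_apply, vecMulVec_apply, Pi.one_apply, mul_one,
    smul_eq_mul]
  apply DifferentiableAt.sub (diffAt_Amat_entry Ct x i j)
  have hs := s_ne Ct hCt hM hx
  simp only [one_div]
  exact (diffAt_sfun Ct hx).inv hs

end CSHIFT

/-- The all-ones vector annihilates the gradient of the C-SHIFT energy:
`1ᵀ ∇‖C_α‖_F² = 0`, i.e. the sum of the partial derivatives vanishes, so that
`a = Σαᵢ` is conserved along gradient descent of `‖C_α‖_F²`. -/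
theorem ones_annihilate_grad {M : ℕ} (Ct : Matrix (Fin M) (Fin M) ℝ) (hCt : Ct.PosDef)
    (α : Fin M → ℝ) (h : IsUnit (Amat Ct α).det) :
    ∑ i, deriv (fun t => frobSq (Cmat Ct (Function.update α i t))) (α i) = 0 := by
  rcases Nat.eq_zero_or_pos M with hM0 | hMpos
  · subst hM0; simp
  have hM : Nonempty (Fin M) := ⟨⟨0, hMpos⟩⟩
  set F : (Fin M → ℝ) → ℝ := fun β => frobSq (Cmat Ct β) with hF
  have hFd : DifferentiableAt ℝ F α := CSHIFT.diffAt_F Ct hCt hM h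
  set L := fderiv ℝ F α with hL
  have hpart : ∀ i, deriv (fun t => F (Function.update α i t)) (α i) = L (Pi.single i 1) := by
    intro i
    have hcurve : HasDerivAt (fun t : ℝ => Function.update α i t) (Pi.single i 1) (α i) := by
      have heq : (fun t : ℝ => Function.update α i t)
          = fun t => α + (t - α i) • (Pi.single i (1 : ℝ) : Fin M → ℝ) := by
        funext t; funext j
        by_cases hj : j = i
        · subst hj; simp
        · simp [Function.update_of_ne hj, Pi.single_eq_of_ne hj]
      rw [heq]
      have h1 : HasDerivAt (fun t : ℝ => t - α i) 1 (α i) := (hasDerivAt_id _).sub_const _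
      have h2 := (h1.smul_const (Pi.single i (1 : ℝ) : Fin M → ℝ)).const_add α
      simpa using h2
    have hf' : HasFDerivAt F L (Function.update α i (α i)) := by
      rw [Function.update_eq_self]; exact hFd.hasFDerivAt
    have hcomp := hf'.comp_hasDerivAt (α i) hcurve
    exact hcomp.deriv
  have hdir : L (1 : Fin M → ℝ) = 0 := by
    have hline : HasDerivAt (fun t : ℝ => α + t • (1 : Fin M → ℝ)) (1 : Fin M → ℝ) 0 := by
      simpa using ((hasDerivAt_id (0 : ℝ)).smul_const (1 : Fin M → ℝ)).const_add α
    have hf0 : HasFDerivAt F L (α + (0 : ℝ) • (1 : Fin M → ℝ)) := by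
      simpa using hFd.hasFDerivAt
    have hg : HasDerivAt (fun t : ℝ => F (α + t • (1 : Fin M → ℝ))) (L 1) 0 :=
      hf0.comp_hasDerivAt (l := F) 0 hline
    have hAcont : Continuous fun t : ℝ => (Amat Ct (α + t • (1 : Fin M → ℝ))).det := by
      apply Continuous.matrix_det
      apply continuous_matrix
      intro i j
      simp only [Amat, Matrix.add_apply, vecMulVec_apply, Pi.add_apply, Pi.smul_apply,
        Pi.one_apply, smul_eq_mul, mul_one, one_mul]
      fun_prop
    have hne : (Amat Ct (α + (0 : ℝ) • (1 : Fin M → ℝ))).det ≠ 0 := by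
      simpa using isUnit_iff_ne_zero.mp h
    have hev : (fun t : ℝ => F (α + t • (1 : Fin M → ℝ))) =ᶠ[nhds 0] fun _ => F α := by
      filter_upwards [hAcont.continuousAt.eventually_ne hne] with t ht
      show frobSq (Cmat Ct (α + t • (1 : Fin M → ℝ))) = frobSq (Cmat Ct α)
      rw [CSHIFT.Cmat_shift Ct hCt hM α t h (isUnit_iff_ne_zero.mpr ht)]
    have hg0 : HasDerivAt (fun t : ℝ => F (α + t • (1 : Fin M → ℝ))) 0 0 :=
      (hasDerivAt_const (0 : ℝ) (F α)).congr_of_eventuallyEq hev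
    exact hg.unique hg0
  calc ∑ i, deriv (fun t => F (Function.update α i t)) (α i)
      = ∑ i, L (Pi.single i 1) := by
        exact Finset.sum_congr rfl fun i _ => hpart i
    _ = L (∑ i, Pi.single i (1 : ℝ)) := (map_sum L _ _).symm
    _ = L (1 : Fin M → ℝ) := by
        congr 1
        have := Finset.univ_sum_single (1 : Fin M → ℝ)
        simpa using this
    _ = 0 := hdir
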